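/- The k-th primorial p_k# = ∏_{j=1}^k p_j satisfies p_k# = e^{(1+o(1)) k ln k}; equivalently, ln(p_k#)/(k ln k) → 1 as k → ∞. -/

import Mathlib

open Filter

section PrimorialAux

open Finset Asymptotics


lemma centralBinom_le (n : ℕ) (hn : 0 < n) :
    Nat.centralBinom n ≤ (2 * n) ^ (Nat.primeCounting' (2 * n + 1)) := by
  rw [← Nat.prod_pow_factorization_centralBinom n, ← Nat.primesBelow_card_eq_primeCounting']
  have h1 : ∏ p ∈ Finset.range (2 * n + 1), p ^ (Nat.centralBinom n).factorization p
      = ∏ p ∈ Nat.primesBelow (2 * n + 1), p ^ (Nat.centralBinom n).factorization p := by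
    rw [Nat.primesBelow]
    refine (Finset.prod_filter_of_ne fun p _ hp => ?_).symm
    by_contra hpp
    rw [Nat.factorization_eq_zero_of_not_prime _ hpp, pow_zero] at hp
    exact hp rfl
  rw [h1]
  refine Finset.prod_le_pow_card _ _ _ fun p _ => ?_
  exact Nat.pow_factorization_choose_le (by omega)

lemma log_bound (n : ℕ) (hn : 4 ≤ n) :
    (n : ℝ) * Real.log 4 ≤
      Real.log n + (Nat.primeCounting' (2 * n + 1) : ℝ) * Real.log (2 * n) := by
  have h1 : (4 : ℕ) ^ n < n * (2 * n) ^ (Nat.primeCounting' (2 * n + 1)) :=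
    lt_of_lt_of_le (Nat.four_pow_lt_mul_centralBinom n hn)
      (Nat.mul_le_mul_left n (centralBinom_le n (by omega)))
  have h2 : ((4 : ℝ)) ^ n ≤ (n : ℝ) * ((2 * n : ℕ) : ℝ) ^ (Nat.primeCounting' (2 * n + 1)) := by
    exact_mod_cast h1.le
  have h3 := Real.log_le_log (by positivity) h2
  rw [Real.log_pow, Real.log_mul (by positivity) (by positivity), Real.log_pow] at h3
  push_cast at h3 ⊢
  linarith

lemma nth_prime_le (ε : ℝ) (hε : 0 < ε) :
    ∀ᶠ k : ℕ in atTop, (Nat.nth Nat.Prime k : ℝ) ≤ (k : ℝ) ^ ((1 : ℝ) + ε) := by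
  have hx : Tendsto (fun k : ℕ => ((k : ℝ)) ^ ((1 : ℝ) + ε)) atTop atTop :=
    (tendsto_rpow_atTop (by positivity)).comp tendsto_natCast_atTop_atTop
  have hlog4 : (0:ℝ) < Real.log 4 := Real.log_pos (by norm_num)
  have hc : (0 : ℝ) < Real.log 4 / (8 * (1 + ε)) := by positivity
  have hF2 : ∀ᶠ k : ℕ in atTop,
      Real.log k ≤ Real.log 4 / (8 * (1 + ε)) * (k : ℝ) ^ ε := by
    have h := (isLittleO_log_rpow_atTop hε).def hc
    filter_upwards [tendsto_natCast_atTop_atTop.eventually h,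
      eventually_ge_atTop 1] with k hk hk1
    have hk0 : (1:ℝ) ≤ (k:ℝ) := by exact_mod_cast hk1
    rwa [Real.norm_eq_abs, Real.norm_eq_abs, abs_of_nonneg (Real.log_nonneg hk0),
      abs_of_nonneg (Real.rpow_nonneg (by linarith) _)] at hk
  filter_upwards [hx.eventually_ge_atTop 10, hF2, eventually_ge_atTop 4] with k hx10 hlogk hk4
  set x : ℝ := (k : ℝ) ^ ((1 : ℝ) + ε) with hxdef
  have hk4R : (4:ℝ) ≤ (k:ℝ) := by exact_mod_cast hk4
  have hk0 : (0:ℝ) < k := by linarith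
  have hk1 : (1:ℝ) ≤ (k:ℝ) := by linarith
  set m : ℕ := ⌊x⌋₊ with hmdef
  set n : ℕ := m / 2 with hndef
  have hx0 : (0:ℝ) ≤ x := by positivity
  have hm_le : (m : ℝ) ≤ x := Nat.floor_le hx0
  have hm_ge : x - 1 < (m : ℝ) := Nat.sub_one_lt_floor x
  have h2n_le_m : 2 * n ≤ m := by omega
  have h2n_le : ((2 * n : ℕ) : ℝ) ≤ x := le_trans (by exact_mod_cast h2n_le_m) hm_le
  have hm_le_2n1 : m ≤ 2 * n + 1 := by omega
  have hn_ge : (x - 2) / 2 ≤ (n : ℝ) := by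
    have : (m:ℝ) ≤ 2 * n + 1 := by exact_mod_cast hm_le_2n1
    linarith
  have hn4 : 4 ≤ n := by
    have : (4:ℝ) ≤ (n:ℝ) := by linarith
    exact_mod_cast this
  have hn0 : (0:ℝ) < n := by
    have : (4:ℕ) ≤ n := hn4
    have : (4:ℝ) ≤ (n:ℝ) := by exact_mod_cast this
    linarith
  have hlogx : Real.log x = (1 + ε) * Real.log k := Real.log_rpow hk0 _
  have hlog2n : Real.log ((2 * n : ℕ) : ℝ) ≤ (1 + ε) * Real.log k := by
    rw [← hlogx]; exact Real.log_le_log (by positivity) h2n_le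
  have hlogn : Real.log (n : ℝ) ≤ (1 + ε) * Real.log k := by
    rw [← hlogx]
    refine Real.log_le_log hn0 (le_trans ?_ h2n_le)
    push_cast; linarith
  have hlogk0 : 0 ≤ Real.log k := Real.log_nonneg hk1
  -- main chain
  set A : ℝ := (1 + ε) * Real.log k with hAdef
  have hA0 : 0 ≤ A := mul_nonneg (by linarith) hlogk0
  set c : ℝ := Real.log 4 / (8 * (1 + ε)) with hcdef
  have hchain : ((k:ℝ) + 1) * Real.log ((2 * n : ℕ) : ℝ) + Real.log (n : ℝ) ≤ (n : ℝ) * Real.log 4 := by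
    calc ((k:ℝ) + 1) * Real.log ((2 * n : ℕ) : ℝ) + Real.log (n : ℝ)
        ≤ ((k:ℝ) + 1) * A + A := by
          have := mul_le_mul_of_nonneg_left hlog2n (by linarith : (0:ℝ) ≤ (k:ℝ) + 1)
          linarith [hlogn]
      _ = ((k:ℝ) + 2) * A := by ring
      _ ≤ (2 * (k:ℝ)) * A := mul_le_mul_of_nonneg_right (by linarith) hA0
      _ ≤ (2 * (k:ℝ)) * ((1 + ε) * (c * (k:ℝ) ^ ε)) := by
          refine mul_le_mul_of_nonneg_left ?_ (by linarith)
          exact mul_le_mul_of_nonneg_left hlogk (by linarith)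
      _ = Real.log 4 / 4 * x := by
          have hxsplit : x = (k:ℝ) * (k:ℝ) ^ ε := by
            rw [hxdef, Real.rpow_add hk0, Real.rpow_one]
          have h1ε : (1:ℝ) + ε ≠ 0 := by linarith
          rw [hxsplit, hcdef]
          field_simp
          ring
      _ ≤ (x - 2) / 2 * Real.log 4 := by
          nlinarith [mul_pos hlog4 (show (0:ℝ) < x - 4 by linarith)]
      _ ≤ (n:ℝ) * Real.log 4 := mul_le_mul_of_nonneg_right hn_ge hlog4.le
  have hkey := log_bound n hn4
  push_cast at hkey
  have hlog2n_pos : 0 < Real.log ((2 * n : ℕ) : ℝ) := by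
    refine Real.log_pos ?_
    push_cast
    linarith
  have hpi : ((k:ℝ) + 1) ≤ (Nat.primeCounting' (2 * n + 1) : ℝ) := by
    have h7 : ((k:ℝ) + 1) * Real.log ((2 * n : ℕ) : ℝ)
        ≤ (Nat.primeCounting' (2 * n + 1) : ℝ) * Real.log ((2 * n : ℕ) : ℝ) := by
      push_cast at hchain ⊢
      nlinarith [hkey, hchain]
    exact le_of_mul_le_mul_right h7 hlog2n_pos
  have hpiN : k + 1 ≤ Nat.primeCounting' (2 * n + 1) := by exact_mod_cast hpi
  have hple : Nat.nth Nat.Prime k ≤ 2 * n := by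
    by_contra hcon
    push_neg at hcon
    have : Nat.primeCounting' (2 * n + 1) ≤ Nat.primeCounting' (Nat.nth Nat.Prime k) :=
      Nat.monotone_primeCounting' hcon
    rw [Nat.primeCounting'_nth_eq] at this
    omega
  calc (Nat.nth Nat.Prime k : ℝ) ≤ ((2 * n : ℕ) : ℝ) := by exact_mod_cast hple
    _ ≤ x := h2n_le

lemma tendsto_one_of_le_of_le {f : ℕ → ℝ}
    (h1 : ∀ᶠ k in atTop, 1 ≤ f k)
    (h2 : ∀ ε : ℝ, 0 < ε → ∀ᶠ k in atTop, f k ≤ 1 + ε) :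
    Tendsto f atTop (nhds 1) := by
  rw [tendsto_order]
  constructor
  · intro a ha
    exact h1.mono fun k hk => lt_of_lt_of_le ha hk
  · intro b hb
    refine (h2 ((b - 1) / 2) (by linarith)).mono fun k hk => by linarith

lemma log_nth_prime_ratio :
    Tendsto (fun j : ℕ => Real.log (Nat.nth Nat.Prime j) / Real.log ((j : ℝ) + 1))
      atTop (nhds 1) := by
  refine tendsto_one_of_le_of_le ?_ ?_
  · filter_upwards [eventually_ge_atTop 2] with j hj
    have hj2 : (2:ℝ) ≤ (j:ℝ) := by exact_mod_cast hj
    have hlogpos : 0 < Real.log ((j:ℝ) + 1) := Real.log_pos (by linarith)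
    rw [le_div_iff₀ hlogpos, one_mul]
    refine Real.log_le_log (by linarith) ?_
    have := Nat.add_two_le_nth_prime j
    have : ((j + 2 : ℕ) : ℝ) ≤ (Nat.nth Nat.Prime j : ℝ) := by exact_mod_cast this
    push_cast at this
    linarith
  · intro ε hε
    filter_upwards [nth_prime_le ε hε, eventually_ge_atTop 2] with j hple hj
    have hj2 : (2:ℝ) ≤ (j:ℝ) := by exact_mod_cast hj
    have hlogpos : 0 < Real.log ((j:ℝ) + 1) := Real.log_pos (by linarith)
    rw [div_le_iff₀ hlogpos]
    have hp0 : (0:ℝ) < (Nat.nth Nat.Prime j : ℝ) := by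
      exact_mod_cast (Nat.prime_nth_prime j).pos
    calc Real.log (Nat.nth Nat.Prime j) ≤ Real.log ((j : ℝ) ^ ((1 : ℝ) + ε)) :=
          Real.log_le_log hp0 hple
      _ = (1 + ε) * Real.log (j : ℝ) := Real.log_rpow (by linarith) _
      _ ≤ (1 + ε) * Real.log ((j:ℝ) + 1) := by
          refine mul_le_mul_of_nonneg_left (Real.log_le_log (by linarith) (by linarith)) (by linarith)

noncomputable def b (j : ℕ) : ℝ := Real.log ((j : ℝ) + 1)
noncomputable def B1 (k : ℕ) : ℝ := ∑ j ∈ Finset.range k, b j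

lemma hb0 : ∀ j, 0 ≤ b j := fun j => Real.log_nonneg (le_add_of_nonneg_left (Nat.cast_nonneg j))

lemma hB1top : Tendsto B1 atTop atTop := by
  have hlog : Tendsto (fun k : ℕ => Real.log (k : ℝ)) atTop atTop :=
    Real.tendsto_log_atTop.comp tendsto_natCast_atTop_atTop
  refine tendsto_atTop_mono' atTop ?_ hlog
  filter_upwards [eventually_ge_atTop 1] with k hk
  have hmem : k - 1 ∈ Finset.range k := by simp; omega
  have h := Finset.single_le_sum (f := b) (fun i _ => hb0 i) hmem
  have hb : b (k - 1) = Real.log (k : ℝ) := by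
    unfold b
    congr 1
    have : ((k - 1 : ℕ) : ℝ) = (k : ℝ) - 1 := by
      have : (1:ℕ) ≤ k := hk
      push_cast [this]
      ring
    rw [this]; ring
  rw [← hb]; exact h

lemma hB1pos : ∀ᶠ k : ℕ in atTop, 0 < B1 k := by
  filter_upwards [eventually_ge_atTop 2] with k hk
  have hmem : (1:ℕ) ∈ Finset.range k := by simp; omega
  have h := Finset.single_le_sum (f := b) (fun i _ => hb0 i) hmem
  have : (0:ℝ) < b 1 := by
    unfold b; norm_num
    exact Real.log_pos (by norm_num)
  calc (0:ℝ) < b 1 := this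
    _ ≤ B1 k := h

-- step 5 helper: ratio of sums tends to one
lemma ratio_one {S : ℕ → ℝ} (h : (fun k => S k - B1 k) =o[atTop] B1) :
    Tendsto (fun k => S k / B1 k) atTop (nhds 1) := by
  have h0 := h.tendsto_div_nhds_zero
  have heq : ∀ᶠ k in atTop, (S k - B1 k) / B1 k + 1 = S k / B1 k := by
    filter_upwards [hB1pos] with k hk
    field_simp
    ring
  have := h0.add_const 1
  rw [zero_add] at this
  exact Tendsto.congr' heq this

noncomputable def pa (j : ℕ) : ℝ := Real.log (Nat.nth Nat.Prime j)

lemma hab : (fun j => pa j - b j) =o[atTop] b := by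
  rw [isLittleO_iff_tendsto']
  · have heq : ∀ᶠ j : ℕ in atTop, pa j / b j - 1 = (pa j - b j) / b j := by
      filter_upwards [eventually_ge_atTop 1] with j hj
      have hbj : b j ≠ 0 := by
        unfold b
        refine ne_of_gt (Real.log_pos ?_)
        have : (1:ℝ) ≤ (j:ℝ) := by exact_mod_cast hj
        linarith
      field_simp
    have h := log_nth_prime_ratio.sub_const 1
    rw [sub_self] at h
    exact Tendsto.congr' heq h
  · filter_upwards [eventually_ge_atTop 1] with j hj hbj
    exfalso
    have : (1:ℝ) ≤ (j:ℝ) := by exact_mod_cast hj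
    exact ne_of_gt (Real.log_pos (by linarith)) hbj

noncomputable def E (j : ℕ) : ℝ := (j : ℝ) * (Real.log ((j : ℝ) + 1) - Real.log (j : ℝ))

lemma hE0 (j : ℕ) : 0 ≤ E j := by
  unfold E
  rcases Nat.eq_zero_or_pos j with h | h
  · simp [h]
  · have hj : (1:ℝ) ≤ (j:ℝ) := by exact_mod_cast h
    have : Real.log (j:ℝ) ≤ Real.log ((j:ℝ)+1) := Real.log_le_log (by linarith) (by linarith)
    nlinarith

lemma hE1 (j : ℕ) : E j ≤ 1 := by
  unfold E
  rcases Nat.eq_zero_or_pos j with h | h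
  · simp [h]
  · have hj : (1:ℝ) ≤ (j:ℝ) := by exact_mod_cast h
    have hlog : Real.log ((j:ℝ)+1) - Real.log (j:ℝ) = Real.log (((j:ℝ)+1)/(j:ℝ)) := by
      rw [Real.log_div (by linarith) (by linarith)]
    have hle : Real.log (((j:ℝ)+1)/(j:ℝ)) ≤ ((j:ℝ)+1)/(j:ℝ) - 1 :=
      Real.log_le_sub_one_of_pos (by positivity)
    have : ((j:ℝ)+1)/(j:ℝ) - 1 = 1/(j:ℝ) := by field_simp; ring
    rw [hlog]
    calc (j:ℝ) * Real.log (((j:ℝ)+1)/(j:ℝ)) ≤ (j:ℝ) * (1/(j:ℝ)) := by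
          refine mul_le_mul_of_nonneg_left ?_ (by linarith)
          rw [← this]; exact hle
      _ = 1 := by field_simp

lemma hEb : E =o[atTop] b := by
  rw [isLittleO_iff]
  intro c hc
  have hblarge : ∀ᶠ j : ℕ in atTop, 1/c ≤ b j := by
    have : Tendsto b atTop atTop := by
      unfold b
      exact Real.tendsto_log_atTop.comp
        (tendsto_atTop_add_const_right _ 1 tendsto_natCast_atTop_atTop)
    exact this.eventually_ge_atTop _
  filter_upwards [hblarge] with j hj
  have hb0j := hb0 j
  rw [Real.norm_eq_abs, Real.norm_eq_abs, abs_of_nonneg (hE0 j), abs_of_nonneg hb0j]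
  calc E j ≤ 1 := hE1 j
    _ = c * (1/c) := by field_simp
    _ ≤ c * b j := mul_le_mul_of_nonneg_left hj hc.le

lemma telescope (k : ℕ) : (k : ℝ) * Real.log k = B1 k + ∑ j ∈ Finset.range k, E j := by
  have h := Finset.sum_range_sub (f := fun j : ℕ => (j : ℝ) * Real.log (j : ℝ)) k
  have hterm : ∀ j : ℕ, ((j+1 : ℕ) : ℝ) * Real.log ((j+1 : ℕ) : ℝ)
      - (j : ℝ) * Real.log (j : ℝ) = b j + E j := by
    intro j
    unfold b E
    push_cast
    ring
  calc (k : ℝ) * Real.log k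
      = ∑ j ∈ Finset.range k, (((j+1 : ℕ) : ℝ) * Real.log ((j+1 : ℕ) : ℝ)
          - (j : ℝ) * Real.log (j : ℝ)) := by rw [h]; simp
    _ = ∑ j ∈ Finset.range k, (b j + E j) := by
        refine Finset.sum_congr rfl fun j _ => hterm j
    _ = B1 k + ∑ j ∈ Finset.range k, E j := by rw [Finset.sum_add_distrib]; rfl

end PrimorialAux

open Finset Asymptotics in
/-- Asymptotic growth of primorials: `p_k# = e^{(1+o(1)) k ln k}`, i.e.
`ln(p_k#) / (k ln k) → 1` as `k → ∞`. -/
theorem primorial_asymptotics :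
    Tendsto (fun k : ℕ =>
        Real.log (∏ j ∈ Finset.range k, (Nat.nth Nat.Prime j : ℝ)) /
          ((k : ℝ) * Real.log k))
      atTop (nhds 1) := by
  have hS : (fun k => (∑ j ∈ Finset.range k, pa j) - B1 k) =o[atTop] B1 := by
    have h := hab.sum_range hb0 hB1top
    refine h.congr' (Eventually.of_forall fun k => ?_) (Eventually.of_forall fun k => rfl)
    show ∑ i ∈ Finset.range k, (pa i - b i) = _
    rw [Finset.sum_sub_distrib]
    rfl
  have h1 := ratio_one hS
  have hK : (fun k : ℕ => (k : ℝ) * Real.log k - B1 k) =o[atTop] B1 := by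
    have h := hEb.sum_range hb0 hB1top
    refine h.congr' (Eventually.of_forall fun k => ?_) (Eventually.of_forall fun k => rfl)
    show ∑ i ∈ Finset.range k, E i = (k : ℝ) * Real.log k - B1 k
    have := telescope k
    linarith
  have h2 := ratio_one hK
  have h3 : Tendsto (fun k : ℕ => B1 k / ((k : ℝ) * Real.log k)) atTop (nhds 1) := by
    have h := h2.inv₀ one_ne_zero
    rw [inv_one] at h
    refine h.congr fun k => ?_
    rw [inv_div]
  have hmul := h1.mul h3
  rw [mul_one] at hmul
  refine Tendsto.congr' ?_ hmul
  filter_upwards [hB1pos, eventually_ge_atTop 2] with k hBk hk2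
  have hlogS : Real.log (∏ j ∈ Finset.range k, (Nat.nth Nat.Prime j : ℝ))
      = ∑ j ∈ Finset.range k, pa j := by
    rw [Real.log_prod]
    · rfl
    · intro j _
      exact_mod_cast (Nat.prime_nth_prime j).pos.ne'
  have hklog : (0:ℝ) < (k : ℝ) * Real.log k := by
    have hk2R : (2:ℝ) ≤ (k:ℝ) := by exact_mod_cast hk2
    have : (0:ℝ) < Real.log k := Real.log_pos (by linarith)
    nlinarith
  rw [← hlogS]
  field_simp
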